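/- Let X be a metric space with the disjoint arcs property restricted via one of the DTP* conditions: suppose X has the 𝒟_c × 𝒟 DTP*, i.e. for any pairs (fᵢ, τᵢ) with f₁ : D × I → X a constant homotopy with its natural level map, and f₂ : D × I → X arbitrary with τ₂ : D × I → I satisfying the 𝒵-category condition, and any ε > 0, there are topographical map pairs (fᵢ', τᵢ') in the respective categories with d(fᵢ, fᵢ') < ε that are disjoint. Then X has the disjoint arcs property: any two paths α, β : I → X can be approximated arbitrarily closely by paths with disjoint images. -/

import Mathlib

open Set Metric unitInterval

/-- the `𝒟_c × 𝒟` DTP* condition implies the disjoint arcs property. -/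
theorem stmt_15 {X : Type*} [MetricSpace X]
    (hDTP : ∀ (f₁ : I × I → X), Continuous f₁ → (∀ z t : I, f₁ (z, t) = f₁ (z, 0)) →
      ∀ (f₂ : I × I → X) (τ₂ : I × I → I), Continuous f₂ → Continuous τ₂ →
      (∀ (z : I) (e : I), e = 0 ∨ e = 1 → τ₂ (z, e) = e) →
      ∀ ε > (0 : ℝ),
      ∃ (f₁' f₂' : I × I → X) (τ₁' τ₂' : I × I → I),
        Continuous f₁' ∧ Continuous f₂' ∧ Continuous τ₁' ∧ Continuous τ₂' ∧
        -- `(f₁', τ₁')` lies in the category `𝒟_c`: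
        (∀ z t : I, f₁' (z, t) = f₁' (z, 0)) ∧ (∀ p : I × I, τ₁' p = p.2) ∧
        -- `(f₂', τ₂')` lies in the category `𝒟`:
        (∀ (z : I) (e : I), e = 0 ∨ e = 1 → τ₂' (z, e) = e) ∧
        (∀ p, dist (f₁ p) (f₁' p) < ε) ∧ (∀ p, dist (f₂ p) (f₂' p) < ε) ∧
        -- disjoint topographical map pairs:
        ∀ t : I, f₁' '' (τ₁' ⁻¹' {t}) ∩ f₂' '' (τ₂' ⁻¹' {t}) = ∅) :
    ∀ (α β : I → X), Continuous α → Continuous β → ∀ ε > (0 : ℝ),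
      ∃ α' β' : I → X, Continuous α' ∧ Continuous β' ∧
        (∀ s, dist (α s) (α' s) < ε) ∧ (∀ s, dist (β s) (β' s) < ε) ∧
        Disjoint (range α') (range β') := by
  intro α β hα hβ ε hε
  obtain ⟨f₁', f₂', τ₁', τ₂', hc₁, hc₂, _, _, hconst, hτ₁, _, hd₁, hd₂, hdisj⟩ :=
    hDTP (fun p => α p.1) (hα.comp continuous_fst) (fun z t => rfl)
      (fun p => β p.2) (fun p => p.2) (hβ.comp continuous_snd) continuous_snd
      (fun z e _ => rfl) ε hε
  refine ⟨fun s => f₁' (s, 0), fun t => f₂' (0, t),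
    hc₁.comp (continuous_id.prodMk continuous_const), hc₂.comp (continuous_const.prodMk continuous_id),
    fun s => hd₁ (s, 0), fun t => hd₂ (0, t), ?_⟩
  rw [disjoint_left]
  rintro x ⟨s, rfl⟩ ⟨t, hxt⟩
  have h := hdisj (τ₂' (0, t))
  have : f₁' (s, 0) ∈ f₁' '' (τ₁' ⁻¹' {τ₂' (0, t)}) ∩ f₂' '' (τ₂' ⁻¹' {τ₂' (0, t)}) := by
    constructor
    · exact ⟨(s, τ₂' (0, t)), by simp [hτ₁], (hconst s (τ₂' (0, t))).symm ▸ rfl⟩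
    · exact ⟨(0, t), rfl, hxt⟩
  rw [h] at this
  exact this
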